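/- Let n be a positive integer and let x, y be symmetric n×n complex matrices (xᵀ = x, yᵀ = y) such that I − x xᴴ, I − xᴴ x, and I − y yᴴ are (Hermitian) positive definite and the matrices I − xᴴ y, I − y xᴴ, and I − x yᴴ are invertible. Let φ_x(y) = (I − x xᴴ)^{−1/2} (y − x) (I − xᴴ y)^{−1} (I − xᴴ x)^{1/2}. Then the matrix I − φ_x(y) · φ_x(y)ᴴ is (Hermitian) positive definite; that is, the map φ_x sends the Siegel disk into the Siegel disk. -/

import Mathlib

open Matrix
open scoped ComplexOrder

/-- The square root of a positive semidefinite matrix, as defined in the older Mathlib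
(removed from current Mathlib). -/
noncomputable def Matrix.PosSemidef.sqrt {n : Type*} [Fintype n] [DecidableEq n]
    {𝕜 : Type*} [RCLike 𝕜] {A : Matrix n n 𝕜} (hA : A.PosSemidef) : Matrix n n 𝕜 :=
  hA.1.eigenvectorUnitary.1 * diagonal ((↑) ∘ Real.sqrt ∘ hA.1.eigenvalues) *
    (star hA.1.eigenvectorUnitary : Matrix n n 𝕜)

lemma myPosSemidef_sqrt {n : Type*} [Fintype n] [DecidableEq n]
    {𝕜 : Type*} [RCLike 𝕜] {A : Matrix n n 𝕜} (hA : A.PosSemidef) : hA.sqrt.PosSemidef := by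
  unfold Matrix.PosSemidef.sqrt
  have hd : (diagonal ((RCLike.ofReal : ℝ → 𝕜) ∘ Real.sqrt ∘ hA.1.eigenvalues)).PosSemidef := by
    rw [posSemidef_diagonal_iff]
    intro i
    simp [Real.sqrt_nonneg]
  have := hd.mul_mul_conjTranspose_same (hA.1.eigenvectorUnitary.1)
  simpa [Matrix.star_eq_conjTranspose] using this

lemma mySqrt_mul_self {n : Type*} [Fintype n] [DecidableEq n]
    {𝕜 : Type*} [RCLike 𝕜] {A : Matrix n n 𝕜} (hA : A.PosSemidef) : hA.sqrt * hA.sqrt = A := by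
  unfold Matrix.PosSemidef.sqrt
  have hU : (star hA.1.eigenvectorUnitary : Matrix n n 𝕜) * hA.1.eigenvectorUnitary.1 = 1 :=
    Unitary.coe_star_mul_self _
  calc _ = hA.1.eigenvectorUnitary.1 * diagonal ((↑) ∘ Real.sqrt ∘ hA.1.eigenvalues) *
        ((star hA.1.eigenvectorUnitary : Matrix n n 𝕜) * hA.1.eigenvectorUnitary.1) *
        diagonal ((↑) ∘ Real.sqrt ∘ hA.1.eigenvalues) *
        (star hA.1.eigenvectorUnitary : Matrix n n 𝕜) := by simp only [mul_assoc]
    _ = hA.1.eigenvectorUnitary.1 * diagonal ((RCLike.ofReal : ℝ → 𝕜) ∘ hA.1.eigenvalues) *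
        (star hA.1.eigenvectorUnitary : Matrix n n 𝕜) := by
        rw [hU, mul_one, mul_assoc _ (diagonal _) (diagonal _), diagonal_mul_diagonal]
        congr 3
        funext i
        simp [← RCLike.ofReal_mul, Real.mul_self_sqrt (hA.eigenvalues_nonneg i)]
    _ = A := by
        conv_rhs => rw [hA.1.spectral_theorem, Unitary.conjStarAlgAut_apply]

lemma myPosDef_of_posSemidef_isUnit {n : ℕ} {M : Matrix (Fin n) (Fin n) ℂ}
    (hM : M.PosSemidef) (hu : IsUnit M) : M.PosDef := by
  refine ⟨hM.1, fun v hv => ?_⟩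
  refine lt_of_le_of_ne (hM.2 v) fun h => hv ?_
  have h0 : M *ᵥ v = 0 := (hM.dotProduct_mulVec_zero_iff v).mp (by
    simpa [dotProduct, mulVec, Finsupp.sum_fintype, Finset.mul_sum, mul_assoc] using h.symm)
  have := Matrix.mulVec_injective_iff_isUnit.mpr hu (a₁ := v) (a₂ := 0)
  simpa [h0] using this

lemma myPosDef_congr {n : ℕ} {E S : Matrix (Fin n) (Fin n) ℂ}
    (hE : E.PosDef) (hS : IsUnit S) : (S * E * Sᴴ).PosDef := by
  have hSH : IsUnit Sᴴ := by
    rw [Matrix.isUnit_iff_isUnit_det] at hS ⊢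
    rw [Matrix.det_conjTranspose]
    exact hS.star
  exact myPosDef_of_posSemidef_isUnit (hE.posSemidef.mul_mul_conjTranspose_same S)
    ((hS.mul hE.isUnit).mul hSH)

lemma mySqrt_posDef {n : ℕ} {M : Matrix (Fin n) (Fin n) ℂ} (hM : M.PosDef) :
    hM.posSemidef.sqrt.PosDef := by
  have hs := myPosSemidef_sqrt hM.posSemidef
  refine myPosDef_of_posSemidef_isUnit hs ?_
  rw [Matrix.isUnit_iff_isUnit_det]
  have hdet : hM.posSemidef.sqrt.det * hM.posSemidef.sqrt.det = M.det := by
    rw [← Matrix.det_mul, mySqrt_mul_self hM.posSemidef]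
  have hMdet : IsUnit M.det := (Matrix.isUnit_iff_isUnit_det M).mp hM.isUnit
  exact isUnit_of_mul_isUnit_left (hdet ▸ hMdet)

/-- The Siegel-disk automorphism `φ_x` maps the Siegel disk into the Siegel disk:
`I - φ_x(y) φ_x(y)ᴴ` is positive definite. -/
theorem siegel_disk_automorphism_posdef {n : ℕ} (hn : 0 < n)
    (x y : Matrix (Fin n) (Fin n) ℂ)
    (hxs : xᵀ = x) (hys : yᵀ = y)
    (h1 : (1 - x * xᴴ).PosDef) (h2 : (1 - xᴴ * x).PosDef) (h3 : (1 - y * yᴴ).PosDef)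
    (h4 : IsUnit (1 - xᴴ * y)) (h5 : IsUnit (1 - y * xᴴ)) (h6 : IsUnit (1 - x * yᴴ)) :
    (1 - ((h1.posSemidef.sqrt)⁻¹ * (y - x) * (1 - xᴴ * y)⁻¹ * h2.posSemidef.sqrt) *
        ((h1.posSemidef.sqrt)⁻¹ * (y - x) * (1 - xᴴ * y)⁻¹ * h2.posSemidef.sqrt)ᴴ).PosDef := by
  classical
  set s := h1.posSemidef.sqrt with hsdef
  set t := h2.posSemidef.sqrt with htdef
  set u := y - x with hudef
  set A := 1 - x * xᴴ with hAdef
  set C := 1 - xᴴ * x with hCdef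
  set B := 1 - xᴴ * y with hBdef
  set D := 1 - y * xᴴ with hDdef
  set Dh := 1 - x * yᴴ with hDhdef
  set E := 1 - y * yᴴ with hEdef
  -- determinant units
  have hAdet : IsUnit A.det := A.isUnit_iff_isUnit_det.mp h1.isUnit
  have hCdet : IsUnit C.det := C.isUnit_iff_isUnit_det.mp h2.isUnit
  have hBdet : IsUnit B.det := B.isUnit_iff_isUnit_det.mp h4
  have hDdet : IsUnit D.det := D.isUnit_iff_isUnit_det.mp h5
  -- hermitian facts
  have hAH : Aᴴ = A := h1.isHermitian
  have hCH : Cᴴ = C := h2.isHermitian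
  have hDH : Dᴴ = Dh := by
    rw [hDdef, hDhdef]
    simp [conjTranspose_sub, conjTranspose_mul]
  have hDhdet : IsUnit Dᴴ.det := by rw [hDH]; exact Dh.isUnit_iff_isUnit_det.mp h6
  have hBHdet : IsUnit Bᴴ.det := by
    rw [Matrix.det_conjTranspose]; exact hBdet.star
  have huH : uᴴ = yᴴ - xᴴ := by rw [hudef, conjTranspose_sub]
  have hsPD : s.PosDef := mySqrt_posDef h1
  have htPD : t.PosDef := mySqrt_posDef h2
  have hsdet : IsUnit s.det := s.isUnit_iff_isUnit_det.mp hsPD.isUnit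
  have hsH : sᴴ = s := hsPD.isHermitian
  have htH : tᴴ = t := htPD.isHermitian
  have hsinvH : (s⁻¹)ᴴ = s⁻¹ := by rw [conjTranspose_nonsing_inv, hsH]
  have hss : s * s = A := mySqrt_mul_self h1.posSemidef
  have htt : t * t = C := mySqrt_mul_self h2.posSemidef
  -- basic commutation facts
  have hxC : x * C = A * x := by rw [hAdef, hCdef]; noncomm_ring
  have f1 : A⁻¹ * x = x * C⁻¹ := by
    have hAx : A * (x * C⁻¹) = x := by
      rw [← mul_assoc, ← hxC, mul_nonsing_inv_cancel_right _ _ hCdet]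
    calc A⁻¹ * x = A⁻¹ * (A * (x * C⁻¹)) := by rw [hAx]
      _ = x * C⁻¹ := nonsing_inv_mul_cancel_left _ _ hAdet
  have f3 : A⁻¹ = 1 + x * (C⁻¹ * xᴴ) := by
    have hA1 : A + x * xᴴ = 1 := by rw [hAdef]; noncomm_ring
    calc A⁻¹ = A⁻¹ * (A + x * xᴴ) := by rw [hA1, mul_one]
      _ = 1 + A⁻¹ * x * xᴴ := by
          rw [mul_add, nonsing_inv_mul _ hAdet, mul_assoc]
      _ = 1 + x * (C⁻¹ * xᴴ) := by rw [f1, mul_assoc]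
  have hDx : D * x = y * C - u := by rw [hDdef, hCdef, hudef]; noncomm_ring
  have hxu : xᴴ * u = xᴴ * y - (1 - C) := by rw [hudef, hCdef]; noncomm_ring
  have hxDh : xᴴ * Dᴴ = C * yᴴ - uᴴ := by
    rw [hDH, hDhdef, hCdef, huH]; noncomm_ring
  -- Key identity L2 : D * (A⁻¹ * u) = u * (C⁻¹ * B)
  have L2 : D * (A⁻¹ * u) = u * (C⁻¹ * B) := by
    calc D * (A⁻¹ * u)
        = D * u + (D * x) * (C⁻¹ * (xᴴ * u)) := by rw [f3]; noncomm_ring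
      _ = D * u + (y * C - u) * (C⁻¹ * (xᴴ * y - (1 - C))) := by rw [hDx, hxu]
      _ = D * u + y * (C * C⁻¹) * (xᴴ * y) - y * (C * C⁻¹) + y * (C * C⁻¹) * C
            - u * (C⁻¹ * (xᴴ * y)) + u * C⁻¹ - u * (C⁻¹ * C) := by noncomm_ring
      _ = u * C⁻¹ - u * (C⁻¹ * (xᴴ * y))
            + (D * u + y * (xᴴ * y) - y + y * C - u) := by
          rw [mul_nonsing_inv _ hCdet, nonsing_inv_mul _ hCdet]; noncomm_ring
      _ = u * C⁻¹ - u * (C⁻¹ * (xᴴ * y)) := by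
          rw [show D * u + y * (xᴴ * y) - y + y * C - u = 0 by
            rw [hDdef, hudef, hCdef]; noncomm_ring, add_zero]
      _ = u * (C⁻¹ * B) := by rw [hBdef]; noncomm_ring
  -- Key identity (**) : D * (A⁻¹ * Dᴴ) = E + u * (C⁻¹ * uᴴ)
  have Dstar : D * (A⁻¹ * Dᴴ) = E + u * (C⁻¹ * uᴴ) := by
    calc D * (A⁻¹ * Dᴴ)
        = D * Dᴴ + (D * x) * (C⁻¹ * (xᴴ * Dᴴ)) := by rw [f3]; noncomm_ring
      _ = D * Dᴴ + (y * C - u) * (C⁻¹ * (C * yᴴ - uᴴ)) := by rw [hDx, hxDh]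
      _ = D * Dᴴ + (y * (C * C⁻¹) * C * yᴴ - y * (C * C⁻¹) * uᴴ
            - u * (C⁻¹ * C) * yᴴ + u * (C⁻¹ * uᴴ)) := by noncomm_ring
      _ = (D * Dᴴ + y * C * yᴴ - y * uᴴ - u * yᴴ) + u * (C⁻¹ * uᴴ) := by
          rw [mul_nonsing_inv _ hCdet, nonsing_inv_mul _ hCdet]; noncomm_ring
      _ = E + u * (C⁻¹ * uᴴ) := by
          rw [show D * Dᴴ + y * C * yᴴ - y * uᴴ - u * yᴴ = E by
            rw [hDH, hDhdef, hDdef, hCdef, hudef, huH, hEdef]; noncomm_ring]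
  have hucu : u * (C⁻¹ * uᴴ) = D * (A⁻¹ * Dᴴ) - E := by rw [Dstar]; noncomm_ring
  -- k1 : u * B⁻¹ = A * (D⁻¹ * (u * C⁻¹))
  have haM : A⁻¹ * u = D⁻¹ * (u * (C⁻¹ * B)) := by
    rw [← L2, nonsing_inv_mul_cancel_left _ _ hDdet]
  have k1 : u * B⁻¹ = A * (D⁻¹ * (u * C⁻¹)) := by
    calc u * B⁻¹ = A * (A⁻¹ * u) * B⁻¹ := by
          rw [mul_nonsing_inv_cancel_left _ _ hAdet]
      _ = A * (D⁻¹ * (u * (C⁻¹ * B))) * B⁻¹ := by rw [haM]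
      _ = A * (D⁻¹ * (u * C⁻¹)) := by
          simp only [← mul_assoc]
          rw [mul_nonsing_inv_cancel_right _ _ hBdet]
  have k1h : (Bᴴ)⁻¹ * uᴴ = C⁻¹ * uᴴ * (Dᴴ)⁻¹ * A := by
    have hc := congrArg conjTranspose k1
    simp only [conjTranspose_mul, conjTranspose_nonsing_inv] at hc
    rw [hCH, hAH] at hc
    exact hc
  -- the middle block
  have kK : u * B⁻¹ * C * ((Bᴴ)⁻¹ * uᴴ)
      = A - A * (D⁻¹ * (E * ((Dᴴ)⁻¹ * A))) := by
    calc u * B⁻¹ * C * ((Bᴴ)⁻¹ * uᴴ)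
        = A * (D⁻¹ * (u * C⁻¹)) * C * (C⁻¹ * uᴴ * (Dᴴ)⁻¹ * A) := by
          rw [k1, k1h]
      _ = A * D⁻¹ * u * (C⁻¹ * C) * C⁻¹ * uᴴ * (Dᴴ)⁻¹ * A := by
          simp only [← mul_assoc]
      _ = A * D⁻¹ * (u * (C⁻¹ * uᴴ)) * (Dᴴ)⁻¹ * A := by
          rw [nonsing_inv_mul _ hCdet]; simp only [← mul_assoc]; rw [mul_one]
      _ = A * D⁻¹ * (D * (A⁻¹ * Dᴴ) - E) * (Dᴴ)⁻¹ * A := by rw [hucu]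
      _ = A * (D⁻¹ * D) * A⁻¹ * (Dᴴ * (Dᴴ)⁻¹) * A
            - A * (D⁻¹ * (E * ((Dᴴ)⁻¹ * A))) := by noncomm_ring
      _ = A - A * (D⁻¹ * (E * ((Dᴴ)⁻¹ * A))) := by
          rw [nonsing_inv_mul _ hDdet, mul_nonsing_inv _ hDhdet, mul_one, mul_one,
            mul_nonsing_inv _ hAdet, one_mul]
  -- assembling
  have hphiH : (s⁻¹ * u * B⁻¹ * t)ᴴ = t * ((Bᴴ)⁻¹ * (uᴴ * s⁻¹)) := by
    simp only [conjTranspose_mul, conjTranspose_nonsing_inv, htH, hsH]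
  have main : 1 - (s⁻¹ * u * B⁻¹ * t) * (s⁻¹ * u * B⁻¹ * t)ᴴ
      = (s * D⁻¹) * E * (s * D⁻¹)ᴴ := by
    rw [hphiH]
    have hm : (s⁻¹ * u * B⁻¹ * t) * (t * ((Bᴴ)⁻¹ * (uᴴ * s⁻¹)))
        = s⁻¹ * (u * B⁻¹ * C * ((Bᴴ)⁻¹ * uᴴ)) * s⁻¹ := by
      rw [← htt]; simp only [← mul_assoc]
    rw [hm, kK]
    have hsA : s⁻¹ * A = s := by
      rw [← hss, ← mul_assoc, nonsing_inv_mul _ hsdet, one_mul]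
    have hAs : A * s⁻¹ = s := by
      rw [← hss, mul_nonsing_inv_cancel_right _ _ hsdet]
    have hSH : (s * D⁻¹)ᴴ = (Dᴴ)⁻¹ * s := by
      rw [conjTranspose_mul, conjTranspose_nonsing_inv, hsH]
    rw [hSH]
    calc 1 - s⁻¹ * (A - A * (D⁻¹ * (E * ((Dᴴ)⁻¹ * A)))) * s⁻¹
        = 1 - (s⁻¹ * A) * s⁻¹ + (s⁻¹ * A) * D⁻¹ * E * (Dᴴ)⁻¹ * (A * s⁻¹) := by
          noncomm_ring
      _ = s * D⁻¹ * E * ((Dᴴ)⁻¹ * s) := by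
          rw [hsA, hAs, mul_nonsing_inv _ hsdet]
          noncomm_ring
  rw [main]
  have hDinvU : IsUnit (D⁻¹) :=
    ⟨⟨D⁻¹, D, nonsing_inv_mul _ hDdet, mul_nonsing_inv _ hDdet⟩, rfl⟩
  exact myPosDef_congr h3 (hsPD.isUnit.mul hDinvU)
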